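/- Let G = ⊕_ω Z/2Z, let f : ω → ω, and let C_f = {x ≠ 0 : max supp(x) ≤ f(min supp(x))}. For c ∈ C_f set U_c = {x : min supp(x) > f(min supp(c))} ∪ {0}. Then for any distinct c, c' ∈ C_f with min supp(c) ≠ min supp(c') or c ≠ c', the translates satisfy (c + U_c) ∩ (c' + U_{c'}) = ∅ whenever c ≠ c'. -/
import Mathlib


noncomputable def mins (x : ℕ →₀ ZMod 2) : ℕ := sInf {n | x n ≠ 0}
noncomputable def maxs (x : ℕ →₀ ZMod 2) : ℕ := sSup {n | x n ≠ 0}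

lemma supp_ne (x : ℕ →₀ ZMod 2) (hx : x ≠ 0) : {n | x n ≠ 0}.Nonempty := by
  rcases Finsupp.ne_iff.mp hx with ⟨a, ha⟩
  exact ⟨a, by simpa using ha⟩

lemma supp_bdd (x : ℕ →₀ ZMod 2) : BddAbove {n | x n ≠ 0} := by
  have : {n | x n ≠ 0} = ↑x.support := by ext n; simp [Finsupp.mem_support_iff]
  rw [this]; exact x.support.finite_toSet.bddAbove

lemma mins_le (x : ℕ →₀ ZMod 2) {n : ℕ} (h : x n ≠ 0) : mins x ≤ n := Nat.sInf_le h

lemma apply_mins (x : ℕ →₀ ZMod 2) (hx : x ≠ 0) : x (mins x) ≠ 0 :=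
  Nat.sInf_mem (supp_ne x hx)

lemma le_maxs (x : ℕ →₀ ZMod 2) {n : ℕ} (h : x n ≠ 0) : n ≤ maxs x :=
  le_csSup (supp_bdd x) h

/-- U_c = {x ≠ 0 : min supp x > f (min supp c)} ∪ {0}. -/
def Uc (f : ℕ → ℕ) (c : ℕ →₀ ZMod 2) : Set (ℕ →₀ ZMod 2) :=
  {x | x ≠ 0 ∧ f (mins c) < mins x} ∪ {0}

lemma key1 (f : ℕ → ℕ) (c u : ℕ →₀ ZMod 2) (hu : u ∈ Uc f c) {n : ℕ}
    (hn : n ≤ f (mins c)) : (c + u) n = c n := by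
  rcases hu with ⟨hu0, hmin⟩ | hu0
  · have : u n = 0 := by
      by_contra h
      exact absurd (mins_le u h) (by omega)
    simp [this]
  · simp at hu0; simp [hu0]

lemma key2 (f : ℕ → ℕ) (c u : ℕ →₀ ZMod 2) (hc : c ≠ 0 ∧ maxs c ≤ f (mins c))
    (hu : u ∈ Uc f c) : mins (c + u) = mins c := by
  have hmle : mins c ≤ f (mins c) :=
    le_trans (le_maxs c (apply_mins c hc.1)) hc.2
  have h1 : (c + u) (mins c) ≠ 0 := by
    rw [key1 f c u hu hmle]; exact apply_mins c hc.1
  have hle : mins (c + u) ≤ mins c := mins_le _ h1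
  have h2 : (c + u) (mins (c + u)) ≠ 0 :=
    apply_mins _ (fun h => h1 (by simp [h]))
  rw [key1 f c u hu (le_trans hle hmle)] at h2
  exact le_antisymm hle (mins_le c h2)

/-- the translates c + U_c, c ∈ C_f, are pairwise disjoint. -/
theorem stmt5 (f : ℕ → ℕ) (c c' : ℕ →₀ ZMod 2)
    (hc : c ≠ 0 ∧ maxs c ≤ f (mins c)) (hc' : c' ≠ 0 ∧ maxs c' ≤ f (mins c'))
    (hne : c ≠ c') :
    ((fun u => c + u) '' Uc f c) ∩ ((fun u => c' + u) '' Uc f c') = ∅ := by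
  ext x
  simp only [Set.mem_inter_iff, Set.mem_image, Set.mem_empty_iff_false, iff_false]
  rintro ⟨⟨u, hu, rfl⟩, ⟨u', hu', heq⟩⟩
  apply hne
  have hm : mins c' = mins c := by
    rw [← key2 f c u hc hu, ← heq, key2 f c' u' hc' hu']
  ext n
  by_cases hn : n ≤ f (mins c)
  · rw [← key1 f c u hu hn, ← heq, key1 f c' u' hu' (by rw [hm]; exact hn)]
  · have h1 : c n = 0 := by
      by_contra h
      exact hn (le_trans (le_maxs c h) hc.2)
    have h2 : c' n = 0 := by
      by_contra h
      exact hn (hm ▸ le_trans (le_maxs c' h) hc'.2)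
    rw [h1, h2]
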